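/- Let A, H, λ₀ be positive real numbers and B a real number, and define g(P) = ln(1 + H·P/(A − B·P)) − λ₀·P. Set C₁ = λ₀·B·(H − B), C₂ = λ₀·A·(2B − H), C₃ = A·H − λ₀·A². If C₁ ≠ 0 and C₂² − 4·C₁·C₃ < 0, then for any 0 ≤ P_min ≤ P_max with A − B·P_max > 0 and A − B·P_min > 0, g is strictly monotone on [P_min, P_max] and hence for every P ∈ [P_min, P_max], g(P) ≤ max(g(P_min), g(P_max)). (This is the negative-discriminant case of Theorem 2: the optimum lies at an endpoint of the feasible interval.) -/

import Mathlib

/-- Negative-discriminant case of Theorem 2: if the quadratic (33) has no real root,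
the leader's objective is strictly monotone on the feasible interval and the optimum
is attained at an endpoint. -/
theorem leader_optimum_endpoints_of_neg_disc
    (A H lam0 : ℝ) (B : ℝ) (hA : 0 < A) (hH : 0 < H) (hlam0 : 0 < lam0)
    (g : ℝ → ℝ) (hg : ∀ P, g P = Real.log (1 + H * P / (A - B * P)) - lam0 * P)
    (C1 C2 C3 : ℝ)
    (hC1 : C1 = lam0 * B * (H - B))
    (hC2 : C2 = lam0 * A * (2 * B - H))
    (hC3 : C3 = A * H - lam0 * A ^ 2)
    (hC1ne : C1 ≠ 0) (hdisc : C2 ^ 2 - 4 * C1 * C3 < 0)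
    (Pmin Pmax : ℝ) (h0 : 0 ≤ Pmin) (hle : Pmin ≤ Pmax)
    (hAmax : 0 < A - B * Pmax) (hAmin : 0 < A - B * Pmin) :
    (StrictMonoOn g (Set.Icc Pmin Pmax) ∨ StrictAntiOn g (Set.Icc Pmin Pmax)) ∧
    ∀ P ∈ Set.Icc Pmin Pmax, g P ≤ max (g Pmin) (g Pmax) := by
  set g2 : ℝ → ℝ := fun x => Real.log (A + (H - B) * x) - Real.log (A - B * x) - lam0 * x
    with hg2
  have key : ∀ x ∈ Set.Icc Pmin Pmax, 0 < A - B * x ∧ 0 < A + (H - B) * x := by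
    intro x hx
    obtain ⟨h1, h2⟩ := hx
    have hx0 : 0 ≤ x := le_trans h0 h1
    have hv : 0 < A - B * x := by
      rcases le_total 0 B with hB | hB
      · nlinarith
      · nlinarith
    refine ⟨hv, ?_⟩
    nlinarith [mul_nonneg hH.le hx0]
  -- g agrees with g2 on a neighborhood of each point where A - B*x > 0 and A + (H-B)*x > 0
  have hEqPt : ∀ x : ℝ, 0 < A - B * x → 0 < A + (H - B) * x → g x = g2 x := by
    intro x hv hu
    rw [hg x, hg2]
    have harg : 1 + H * x / (A - B * x) = (A + (H - B) * x) / (A - B * x) := by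
      rw [one_add_div (ne_of_gt hv)]
      ring
    rw [harg, Real.log_div (ne_of_gt hu) (ne_of_gt hv)]
  -- quadratic sign
  have hquad : ∀ x : ℝ, 0 < C1 * (C1 * x ^ 2 + C2 * x + C3) := by
    intro x
    nlinarith [sq_nonneg (2 * C1 * x + C2)]
  -- continuity of g on Icc
  have hvcont : Continuous fun x : ℝ => A - B * x := continuous_const.sub (continuous_const.mul continuous_id)
  have hucont : Continuous fun x : ℝ => A + (H - B) * x := continuous_const.add (continuous_const.mul continuous_id)
  have hcont : ContinuousOn g (Set.Icc Pmin Pmax) := by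
    have hcont2 : ContinuousOn g2 (Set.Icc Pmin Pmax) := by
      apply ContinuousOn.sub
      apply ContinuousOn.sub
      · exact ContinuousOn.log hucont.continuousOn
          (fun x hx => ne_of_gt (key x hx).2)
      · exact ContinuousOn.log hvcont.continuousOn
          (fun x hx => ne_of_gt (key x hx).1)
      · exact (continuous_const.mul continuous_id).continuousOn
    exact hcont2.congr (fun x hx => hEqPt x (key x hx).1 (key x hx).2)
  -- derivative of g on interior
  have hderiv : ∀ x ∈ interior (Set.Icc Pmin Pmax),
      deriv g x = (C1 * x ^ 2 + C2 * x + C3)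
        / ((A + (H - B) * x) * (A - B * x)) := by
    intro x hx
    have hx' : x ∈ Set.Icc Pmin Pmax := interior_subset hx
    obtain ⟨hv, hu⟩ := key x hx'
    have hu' : HasDerivAt (fun y : ℝ => A + (H - B) * y) (H - B) x := by
      simpa using ((hasDerivAt_id x).const_mul (H - B)).const_add A
    have hv' : HasDerivAt (fun y : ℝ => A - B * y) (-B) x := by
      simpa using ((hasDerivAt_id x).const_mul B).const_sub A
    have hlogu := hu'.log (ne_of_gt hu)
    have hlogv := hv'.log (ne_of_gt hv)
    have hlin : HasDerivAt (fun y : ℝ => lam0 * y) lam0 x := by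
      simpa using (hasDerivAt_id x).const_mul lam0
    have hg2d : HasDerivAt g2
        ((H - B) / (A + (H - B) * x) - (-B) / (A - B * x) - lam0) x :=
      (hlogu.sub hlogv).sub hlin
    have hev : g =ᶠ[nhds x] g2 := by
      have hopen : IsOpen {y : ℝ | 0 < A - B * y ∧ 0 < A + (H - B) * y} :=
        (isOpen_lt continuous_const hvcont).inter (isOpen_lt continuous_const hucont)
      have hmem : x ∈ {y : ℝ | 0 < A - B * y ∧ 0 < A + (H - B) * y} := ⟨hv, hu⟩
      filter_upwards [hopen.mem_nhds hmem] with y hy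
      exact hEqPt y hy.1 hy.2
    have hgd : HasDerivAt g
        ((H - B) / (A + (H - B) * x) - (-B) / (A - B * x) - lam0) x :=
      hg2d.congr_of_eventuallyEq hev
    rw [hgd.deriv]
    subst hC1 hC2 hC3
    field_simp
    ring
  have hdenpos : ∀ x ∈ Set.Icc Pmin Pmax, 0 < (A + (H - B) * x) * (A - B * x) :=
    fun x hx => mul_pos (key x hx).2 (key x hx).1
  rcases hC1ne.lt_or_gt with hC1neg | hC1pos
  · -- C1 < 0 : quadratic always negative, g strictly anti
    have hanti : StrictAntiOn g (Set.Icc Pmin Pmax) := by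
      apply strictAntiOn_of_deriv_neg (convex_Icc _ _) hcont
      intro x hx
      rw [hderiv x hx]
      have hqx : C1 * x ^ 2 + C2 * x + C3 < 0 := by nlinarith [hquad x]
      exact div_neg_of_neg_of_pos hqx (hdenpos x (interior_subset hx))
    refine ⟨Or.inr hanti, fun P hP => ?_⟩
    exact le_trans (hanti.antitoneOn (Set.left_mem_Icc.2 hle) hP hP.1) (le_max_left _ _)
  · -- C1 > 0 : quadratic always positive, g strictly mono
    have hmono : StrictMonoOn g (Set.Icc Pmin Pmax) := by
      apply strictMonoOn_of_deriv_pos (convex_Icc _ _) hcont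
      intro x hx
      rw [hderiv x hx]
      have hqx : 0 < C1 * x ^ 2 + C2 * x + C3 := by nlinarith [hquad x]
      exact div_pos hqx (hdenpos x (interior_subset hx))
    refine ⟨Or.inl hmono, fun P hP => ?_⟩
    exact le_trans (hmono.monotoneOn hP (Set.right_mem_Icc.2 hle) hP.2) (le_max_right _ _)
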